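/- Let M > 0, let I ⊆ ℝ be an open interval, and let a : I → (0, ∞) and r₁ : I → (0, ∞) be differentiable functions satisfying 1 − 2M/r₁(t) + r₁(t)²/a(t)² = 0 for all t ∈ I. Then, with H = a′/a, for all t ∈ I: r₁′(t) = 2H(t)·r₁(t)³ / (a(t)² + 3r₁(t)²). -/

import Mathlib

/-- The boundary radius `r₁(t)` of the allowed region of the open
(K = -1) McVittie spacetime, i.e. the positive root of `1 - 2M/r + r²/a(t)² = 0`,
satisfies `r₁' = 2H·r₁³/(a² + 3r₁²)` where `H = a'/a`. -/
theorem mcvittie_open_boundary_derivative (M : ℝ) (hM : 0 < M)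
    (I : Set ℝ) (hIopen : IsOpen I) (hIconn : I.OrdConnected)
    (a a' r₁ r₁' : ℝ → ℝ)
    (ha_pos : ∀ t ∈ I, 0 < a t)
    (hr₁_pos : ∀ t ∈ I, 0 < r₁ t)
    (ha' : ∀ t ∈ I, HasDerivAt a (a' t) t)
    (hr₁' : ∀ t ∈ I, HasDerivAt r₁ (r₁' t) t)
    (hroot : ∀ t ∈ I, 1 - 2 * M / r₁ t + (r₁ t) ^ 2 / (a t) ^ 2 = 0)
    (H : ℝ → ℝ) (hH : ∀ t ∈ I, H t = a' t / a t) :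
    ∀ t ∈ I, r₁' t = 2 * H t * (r₁ t) ^ 3 / ((a t) ^ 2 + 3 * (r₁ t) ^ 2) := by
  intro t ht
  have haT := ha_pos t ht
  have hrT := hr₁_pos t ht
  -- The polynomial form of the root equation, valid on all of I
  have hzero : ∀ s ∈ I, r₁ s * (a s) ^ 2 - 2 * M * (a s) ^ 2 + (r₁ s) ^ 3 = 0 := by
    intro s hs
    have h := hroot s hs
    have hr := (hr₁_pos s hs).ne'
    have ha := (ha_pos s hs).ne'
    field_simp at h
    nlinarith [h]
  -- Derivative of F s = r₁ s * a s ^ 2 - 2M a s ^ 2 + r₁ s ^ 3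
  have hF : HasDerivAt (fun s => r₁ s * (a s) ^ 2 - 2 * M * (a s) ^ 2 + (r₁ s) ^ 3)
      (r₁' t * (a t) ^ 2 + r₁ t * (2 * a t * a' t) - 2 * M * (2 * a t * a' t)
        + 3 * (r₁ t) ^ 2 * r₁' t) t := by
    have h1 := (hr₁' t ht).mul ((ha' t ht).pow 2)
    have h2 := ((ha' t ht).pow 2).const_mul (2 * M)
    have h3 := (hr₁' t ht).pow 3
    convert (h1.sub h2).add h3 using 1
    · rfl
    · rfl
    · funext s; rfl
    · simp only [Pi.pow_apply]; norm_num
  -- F vanishes near t, hence its derivative is 0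
  have hFz : HasDerivAt (fun s => r₁ s * (a s) ^ 2 - 2 * M * (a s) ^ 2 + (r₁ s) ^ 3)
      (0 : ℝ) t := by
    have hev : (fun s => r₁ s * (a s) ^ 2 - 2 * M * (a s) ^ 2 + (r₁ s) ^ 3)
        =ᶠ[nhds t] fun _ => (0 : ℝ) :=
      Filter.eventuallyEq_of_mem (hIopen.mem_nhds ht) hzero
    exact (hasDerivAt_const t (0 : ℝ)).congr_of_eventuallyEq hev
  have hd : r₁' t * (a t) ^ 2 + r₁ t * (2 * a t * a' t) - 2 * M * (2 * a t * a' t)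
      + 3 * (r₁ t) ^ 2 * r₁' t = 0 := hF.unique hFz
  have hz := hzero t ht
  rw [hH t ht]
  have hden : (a t) ^ 2 + 3 * (r₁ t) ^ 2 ≠ 0 := by positivity
  have ha0 : a t ≠ 0 := haT.ne'
  field_simp
  linear_combination a t * hd - 2 * a' t * hz
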